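/- Let H be an m×m real symmetric matrix and u,v strongly cospectral indices. Then |σ⁻ᵤᵥ(H)| = 1 (the set {λⱼ : Eⱼeᵤ = −Eⱼeᵥ} is a singleton) if and only if eᵤ − eᵥ is an eigenvector of H. Similarly, |σ⁺ᵤᵥ(H)| = 1 if and only if eᵤ + eᵥ is an eigenvector of H. -/
import Mathlib
open Matrix

lemma sum_mulVec' {m r : ℕ} (f : Fin r → Matrix (Fin m) (Fin m) ℝ) (x : Fin m → ℝ) :
    (∑ j, f j) *ᵥ x = ∑ j, f j *ᵥ x := by
  ext i
  simp [Matrix.mulVec, dotProduct, Matrix.sum_apply, Finset.sum_mul]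
  rw [Finset.sum_comm]

lemma aux10 {m r : ℕ} (H : Matrix (Fin m) (Fin m) ℝ)
    (lam : Fin r → ℝ) (E : Fin r → Matrix (Fin m) (Fin m) ℝ)
    (hlam : Function.Injective lam)
    (hEidem : ∀ j, E j * E j = E j)
    (hEorth : ∀ j k, j ≠ k → E j * E k = 0)
    (hEsum : ∑ j, E j = 1)
    (hspec : H = ∑ j, lam j • E j)
    (x : Fin m → ℝ) (hx : x ≠ 0) :
    (∃! j, E j *ᵥ x ≠ 0) ↔ ∃ θ : ℝ, H *ᵥ x = θ • x := by
  have hEH : ∀ j, E j * H = lam j • E j := by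
    intro j
    rw [hspec, Finset.mul_sum]
    rw [Finset.sum_eq_single j]
    · rw [Matrix.mul_smul, hEidem]
    · intro k _ hk
      rw [Matrix.mul_smul, hEorth j k (Ne.symm hk), smul_zero]
    · simp
  have hsumx : ∑ j, E j *ᵥ x = x := by
    rw [← sum_mulVec', hEsum, Matrix.one_mulVec]
  have hHx : H *ᵥ x = ∑ j, lam j • (E j *ᵥ x) := by
    rw [hspec, sum_mulVec']
    congr 1; ext j; rw [Matrix.smul_mulVec]
  constructor
  · rintro ⟨j0, hj0, huniq⟩
    refine ⟨lam j0, ?_⟩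
    have hzero : ∀ k, k ≠ j0 → E k *ᵥ x = 0 := by
      intro k hk
      by_contra h
      exact hk (huniq k h)
    have hx' : E j0 *ᵥ x = x := by
      conv_rhs => rw [← hsumx]
      exact (Finset.sum_eq_single j0 (fun k _ hk => hzero k hk) (fun h => absurd (Finset.mem_univ j0) h)).symm
    rw [hHx, Finset.sum_eq_single j0 (fun k _ hk => by rw [hzero k hk, smul_zero]) (fun h => absurd (Finset.mem_univ j0) h), hx']
  · rintro ⟨θ, hθ⟩
    have key : ∀ j, E j *ᵥ x ≠ 0 → lam j = θ := by
      intro j hj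
      have h1 : E j *ᵥ (H *ᵥ x) = lam j • (E j *ᵥ x) := by
        rw [Matrix.mulVec_mulVec, hEH j, Matrix.smul_mulVec]
      have h2 : E j *ᵥ (H *ᵥ x) = θ • (E j *ᵥ x) := by
        rw [hθ, Matrix.mulVec_smul]
      have h3 : (lam j - θ) • (E j *ᵥ x) = 0 := by
        rw [sub_smul, ← h1, ← h2, sub_self]
      rcases smul_eq_zero.mp h3 with h | h
      · exact sub_eq_zero.mp h
      · exact absurd h hj
    have hex : ∃ j, E j *ᵥ x ≠ 0 := by
      by_contra h
      push_neg at h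
      apply hx
      conv_lhs => rw [← hsumx]
      exact Finset.sum_eq_zero fun j _ => h j
    obtain ⟨j0, hj0⟩ := hex
    exact ⟨j0, hj0, fun k hk => hlam ((key k hk).trans (key j0 hj0).symm)⟩


theorem stmt10 {m r : ℕ} (H : Matrix (Fin m) (Fin m) ℝ)
    (lam : Fin r → ℝ) (E : Fin r → Matrix (Fin m) (Fin m) ℝ)
    (hH : H.IsSymm)
    (hlam : Function.Injective lam)
    (hEsymm : ∀ j, (E j).IsSymm)
    (hEidem : ∀ j, E j * E j = E j)
    (hEorth : ∀ j k, j ≠ k → E j * E k = 0)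
    (hEsum : ∑ j, E j = 1)
    (hEnz : ∀ j, E j ≠ 0)
    (hspec : H = ∑ j, lam j • E j)
    (u v : Fin m) (huv : u ≠ v)
    (hsc : ∀ j, (E j) *ᵥ (Pi.single u 1 : Fin m → ℝ) = (E j) *ᵥ (Pi.single v 1 : Fin m → ℝ) ∨
      (E j) *ᵥ (Pi.single u 1 : Fin m → ℝ) = -((E j) *ᵥ (Pi.single v 1 : Fin m → ℝ))) :
    ((∃! j, (E j) *ᵥ (Pi.single u 1 : Fin m → ℝ) ≠ 0 ∧
        (E j) *ᵥ (Pi.single u 1 : Fin m → ℝ) = -((E j) *ᵥ (Pi.single v 1 : Fin m → ℝ)))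
      ↔ ∃ θ : ℝ, H *ᵥ ((Pi.single u 1 : Fin m → ℝ) - Pi.single v 1) =
          θ • ((Pi.single u 1 : Fin m → ℝ) - Pi.single v 1)) ∧
    ((∃! j, (E j) *ᵥ (Pi.single u 1 : Fin m → ℝ) ≠ 0 ∧
        (E j) *ᵥ (Pi.single u 1 : Fin m → ℝ) = (E j) *ᵥ (Pi.single v 1 : Fin m → ℝ))
      ↔ ∃ θ : ℝ, H *ᵥ ((Pi.single u 1 : Fin m → ℝ) + Pi.single v 1) =
          θ • ((Pi.single u 1 : Fin m → ℝ) + Pi.single v 1)) := by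
  set eu : Fin m → ℝ := Pi.single u 1 with heu
  set ev : Fin m → ℝ := Pi.single v 1 with hev
  have hxm : eu - ev ≠ 0 := by
    intro h
    have := congrFun h u
    simp [heu, hev, Pi.single_apply, huv, Ne.symm huv] at this
  have hxp : eu + ev ≠ 0 := by
    intro h
    have := congrFun h u
    simp [heu, hev, Pi.single_apply, huv, Ne.symm huv] at this
  constructor
  · rw [← aux10 H lam E hlam hEidem hEorth hEsum hspec (eu - ev) hxm]
    apply existsUnique_congr
    intro j
    rw [Matrix.mulVec_sub]
    constructor
    · rintro ⟨h1, h2⟩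
      have hev' : E j *ᵥ ev = -(E j *ᵥ eu) := by rw [h2, neg_neg]
      rw [hev', sub_neg_eq_add, ← two_smul ℝ]
      intro h
      rw [smul_eq_zero] at h
      rcases h with h | h
      · norm_num at h
      · exact h1 h
    · intro h
      rcases hsc j with h2 | h2
      · rw [h2, sub_self] at h; exact absurd rfl h
      · refine ⟨?_, h2⟩
        intro h1
        rw [h1] at h2
        have hv0 : E j *ᵥ ev = 0 := by rw [eq_comm, neg_eq_zero] at h2; exact h2
        rw [h1, hv0, sub_zero] at h
        exact h rfl
  · rw [← aux10 H lam E hlam hEidem hEorth hEsum hspec (eu + ev) hxp]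
    apply existsUnique_congr
    intro j
    rw [Matrix.mulVec_add]
    constructor
    · rintro ⟨h1, h2⟩
      rw [← h2, ← two_smul ℝ]
      intro h
      rw [smul_eq_zero] at h
      rcases h with h | h
      · norm_num at h
      · exact h1 h
    · intro h
      rcases hsc j with h2 | h2
      · refine ⟨?_, h2⟩
        intro h1
        rw [h1] at h2
        rw [h1, ← h2, add_zero] at h
        exact h rfl
      · rw [h2, neg_add_cancel] at h; exact absurd rfl h
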